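/- If N is even, then the spectrum of the Harper matrix h(a, b, ε) is symmetric about zero: for all real a, b, ε and every complex λ, λ is an eigenvalue of h(a, b, ε) if and only if −λ is an eigenvalue of h(a, b, ε). -/

import Mathlib

open Matrix Complex

/-- The primitive `N`-th root of unity `ω = exp(2πi/N)`. -/
noncomputable def omegaN (N : ℕ) : ℂ := Complex.exp (2 * (Real.pi : ℂ) * Complex.I / (N : ℂ))

/-- The clock matrix `Z` with `Z_{jk} = ω^j` if `j = k`, `0` otherwise. -/
noncomputable def clockZ (N : ℕ) : Matrix (Fin N) (Fin N) ℂ :=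
  Matrix.diagonal fun j => omegaN N ^ (j : ℕ)

/-- The shift matrix `X` with `X_{jk} = 1` if `j = k + 1 (mod N)`, `0` otherwise. -/
def shiftX (N : ℕ) : Matrix (Fin N) (Fin N) ℂ :=
  Matrix.of fun j k => if (j : ℕ) = ((k : ℕ) + 1) % N then 1 else 0

/-- The shifted Harper matrix
`h(a,b,ε) = (a/2)·e^{ib}·X + (a/2)·e^{−ib}·Xᴴ + (ε/2)·(Z + Zᴴ)`. -/
noncomputable def harper (N : ℕ) (a b ε : ℝ) : Matrix (Fin N) (Fin N) ℂ :=
  ((a : ℂ) / 2 * Complex.exp ((b : ℂ) * Complex.I)) • shiftX N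
  + ((a : ℂ) / 2 * Complex.exp (-(b : ℂ) * Complex.I)) • (shiftX N)ᴴ
  + ((ε : ℂ) / 2) • (clockZ N + (clockZ N)ᴴ)

/-- The parity matrix `P` with `P_{jk} = 1` if `j + k ≡ 0 (mod N)`, `0` otherwise. -/
def parityP (N : ℕ) : Matrix (Fin N) (Fin N) ℂ :=
  Matrix.of fun j k => if ((j : ℕ) + (k : ℕ)) % N = 0 then 1 else 0

/-- The discrete Fourier transform matrix `Q` with `Q_{jk} = ω^{jk}/√N`. -/
noncomputable def dftQ (N : ℕ) : Matrix (Fin N) (Fin N) ℂ :=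
  Matrix.of fun j k => omegaN N ^ ((j : ℕ) * (k : ℕ)) / (Real.sqrt N : ℂ)

namespace HarperAux

variable {N : ℕ}

open Fin.NatCast

/-- The chiral symmetry matrix: diag((-1)^j) times a shift by N/2. -/
noncomputable def parW (N : ℕ) [NeZero N] : Matrix (Fin N) (Fin N) ℂ :=
  Matrix.of fun j k => if j = k + ((N / 2 : ℕ) : Fin N) then (-1 : ℂ) ^ (j : ℕ) else 0

lemma pow_val_add [NeZero N] {ζ : ℂ} (hζ : ζ ^ N = 1) (p q : Fin N) :
    ζ ^ ((p + q : Fin N) : ℕ) = ζ ^ (p : ℕ) * ζ ^ (q : ℕ) := by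
  rw [Fin.val_add, ← pow_add]
  conv_rhs => rw [← Nat.mod_add_div ((p : ℕ) + (q : ℕ)) N]
  rw [pow_add, pow_mul, hζ, one_pow, mul_one]

lemma valm (hN : 2 ≤ N) [NeZero N] : (((N / 2 : ℕ) : Fin N) : ℕ) = N / 2 := by
  rw [Fin.val_natCast]
  exact Nat.mod_eq_of_lt (Nat.div_lt_self (by omega) one_lt_two)

lemma val1 (hN : 2 ≤ N) [NeZero N] : ((1 : Fin N) : ℕ) = 1 := by
  obtain ⟨n, rfl⟩ : ∃ n, N = n + 2 := ⟨N - 2, by omega⟩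
  rfl

lemma U_mul [NeZero N] (A : Matrix (Fin N) (Fin N) ℂ) (j k : Fin N) :
    (parW N * A) j k = (-1 : ℂ) ^ (j : ℕ) * A (j - ((N / 2 : ℕ) : Fin N)) k := by
  simp only [Matrix.mul_apply, parW, Matrix.of_apply]
  rw [Finset.sum_eq_single (j - ((N / 2 : ℕ) : Fin N))]
  · rw [if_pos (by rw [sub_add_cancel])]
  · intro l _ hl
    rw [if_neg fun h => hl (eq_sub_of_add_eq h.symm), zero_mul]
  · intro hmem; exact absurd (Finset.mem_univ _) hmem

lemma mul_U [NeZero N] (A : Matrix (Fin N) (Fin N) ℂ) (j k : Fin N) :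
    (A * parW N) j k
      = A j (k + ((N / 2 : ℕ) : Fin N)) * (-1 : ℂ) ^ ((k + ((N / 2 : ℕ) : Fin N) : Fin N) : ℕ) := by
  simp only [Matrix.mul_apply, parW, Matrix.of_apply]
  rw [Finset.sum_eq_single (k + ((N / 2 : ℕ) : Fin N))]
  · rw [if_pos rfl]
  · intro l _ hl
    rw [if_neg hl, mul_zero]
  · intro hmem; exact absurd (Finset.mem_univ _) hmem

lemma shiftX_apply [NeZero N] (hN : 2 ≤ N) (j k : Fin N) :
    shiftX N j k = if j = k + 1 then 1 else 0 := by
  have h1 : ((k + 1 : Fin N) : ℕ) = ((k : ℕ) + 1) % N := by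
    rw [Fin.val_add, val1 hN]
  simp only [shiftX, Matrix.of_apply]
  by_cases h : j = k + 1
  · rw [if_pos (by rw [h]; exact h1), if_pos h]
  · rw [if_neg (fun hv => h (Fin.ext (by rw [hv, ← h1]))), if_neg h]

lemma UX [NeZero N] (hN : 2 ≤ N) (hNe : Even N) :
    parW N * shiftX N = -(shiftX N * parW N) := by
  have h1 : (-1 : ℂ) ^ N = 1 := hNe.neg_one_pow
  ext j k
  rw [Matrix.neg_apply, U_mul, mul_U, shiftX_apply hN, shiftX_apply hN]
  simp only [sub_eq_iff_eq_add]
  by_cases hcase : j = k + 1 + ((N / 2 : ℕ) : Fin N)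
  · have hcase' : j = (k + ((N / 2 : ℕ) : Fin N)) + 1 := by rw [hcase, add_right_comm]
    rw [if_pos hcase, if_pos hcase', hcase', mul_one, one_mul, pow_val_add h1, val1 hN, pow_one]
    ring
  · have hcase' : ¬ j = (k + ((N / 2 : ℕ) : Fin N)) + 1 := by
      rw [add_right_comm]; exact hcase
    rw [if_neg hcase, if_neg hcase', mul_zero, zero_mul, neg_zero]

lemma UXh [NeZero N] (hN : 2 ≤ N) (hNe : Even N) :
    parW N * (shiftX N)ᴴ = -((shiftX N)ᴴ * parW N) := by
  have h1 : (-1 : ℂ) ^ N = 1 := hNe.neg_one_pow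
  have hconj : ∀ j k : Fin N, (shiftX N)ᴴ j k = if k = j + 1 then (1 : ℂ) else 0 := by
    intro j k
    rw [Matrix.conjTranspose_apply, shiftX_apply hN]
    split_ifs <;> simp
  ext j k
  rw [Matrix.neg_apply, U_mul, mul_U, hconj, hconj]
  simp only [sub_add_eq_add_sub, eq_sub_iff_add_eq]
  by_cases hcase : k + ((N / 2 : ℕ) : Fin N) = j + 1
  · rw [if_pos hcase, mul_one, one_mul, hcase, pow_val_add h1, val1 hN, pow_one]
    ring
  · rw [if_neg hcase, mul_zero, zero_mul, neg_zero]

lemma UD [NeZero N] (hN : 2 ≤ N) (hNe : Even N) {ζ : ℂ} (h1 : ζ ^ N = 1)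
    (h2 : ζ ^ (N / 2) = -1) :
    parW N * Matrix.diagonal (fun j : Fin N => ζ ^ (j : ℕ))
      = -(Matrix.diagonal (fun j : Fin N => ζ ^ (j : ℕ)) * parW N) := by
  have hneg1 : (-1 : ℂ) ^ N = 1 := hNe.neg_one_pow
  ext j k
  rw [Matrix.neg_apply, U_mul, mul_U, Matrix.diagonal_apply, Matrix.diagonal_apply]
  simp only [sub_eq_iff_eq_add]
  by_cases hcase : j = k + ((N / 2 : ℕ) : Fin N)
  · have hjm : j - ((N / 2 : ℕ) : Fin N) = k := by rw [hcase]; exact add_sub_cancel_right _ _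
    rw [if_pos hcase, hjm, hcase, pow_val_add h1, pow_val_add hneg1, valm hN, h2]
    simp only [if_true]
    ring
  · simp [hcase]

lemma omega_pow_N (hN : N ≠ 0) : omegaN N ^ N = 1 := by
  have hc : (N : ℂ) ≠ 0 := Nat.cast_ne_zero.mpr hN
  rw [omegaN, ← Complex.exp_nat_mul,
    show (N : ℂ) * (2 * (Real.pi : ℂ) * Complex.I / (N : ℂ)) = 2 * (Real.pi : ℂ) * Complex.I from
      by field_simp]
  exact Complex.exp_two_pi_mul_I

lemma omega_pow_half (hN : 2 ≤ N) (hNe : Even N) : omegaN N ^ (N / 2) = -1 := by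
  obtain ⟨t, ht⟩ := hNe
  have ht2 : N = 2 * t := by omega
  have htc : (t : ℂ) ≠ 0 := Nat.cast_ne_zero.mpr (by omega)
  have hdiv : N / 2 = t := by omega
  rw [omegaN, ← Complex.exp_nat_mul, hdiv, ht2,
    show (t : ℂ) * (2 * (Real.pi : ℂ) * Complex.I / ((2 * t : ℕ) : ℂ))
        = (Real.pi : ℂ) * Complex.I from by push_cast; field_simp]
  exact Complex.exp_pi_mul_I

lemma key [NeZero N] (hN : 2 ≤ N) (hNe : Even N) (a b ε : ℝ) :
    parW N * harper N a b ε = -(harper N a b ε * parW N) := by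
  have hX := UX (N := N) hN hNe
  have hXh := UXh (N := N) hN hNe
  have hZ : parW N * clockZ N = -(clockZ N * parW N) := by
    have := UD (N := N) hN hNe (omega_pow_N (by omega)) (omega_pow_half hN hNe)
    simpa [clockZ] using this
  have hZh : parW N * (clockZ N)ᴴ = -((clockZ N)ᴴ * parW N) := by
    have hstar : (clockZ N)ᴴ
        = Matrix.diagonal fun j : Fin N => ((starRingEnd ℂ) (omegaN N)) ^ (j : ℕ) := by
      have hfun : (star fun j : Fin N => omegaN N ^ (j : ℕ))
          = fun j : Fin N => ((starRingEnd ℂ) (omegaN N)) ^ (j : ℕ) := by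
        funext j
        simp only [Pi.star_apply]
        exact star_pow _ _
      rw [clockZ, Matrix.diagonal_conjTranspose, hfun]
    rw [hstar]
    exact UD hN hNe (by rw [← map_pow, omega_pow_N (by omega), _root_.map_one])
      (by rw [← map_pow, omega_pow_half hN hNe, map_neg, _root_.map_one])
  simp only [harper, Matrix.add_mul, Matrix.mul_add, Matrix.smul_mul, Matrix.mul_smul,
    hX, hXh, hZ, hZh, smul_neg, smul_add, neg_add, neg_neg]

lemma UU [NeZero N] (hN : 2 ≤ N) (hNe : Even N) :
    parW N * parW N = ((-1 : ℂ) ^ (N / 2)) • (1 : Matrix (Fin N) (Fin N) ℂ) := by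
  have hneg1 : (-1 : ℂ) ^ N = 1 := hNe.neg_one_pow
  have hmm : ((N / 2 : ℕ) : Fin N) + ((N / 2 : ℕ) : Fin N) = 0 := by
    apply Fin.ext
    rw [Fin.val_add, valm hN]
    have hh : N / 2 + N / 2 = N := by obtain ⟨t, ht⟩ := hNe; omega
    rw [hh, Nat.mod_self, Fin.val_zero]
  have hnegm : -((N / 2 : ℕ) : Fin N) = ((N / 2 : ℕ) : Fin N) := neg_eq_of_add_eq_zero_left hmm
  ext j k
  rw [U_mul]
  simp only [parW, Matrix.of_apply, Matrix.smul_apply, Matrix.one_apply, smul_eq_mul]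
  by_cases hcase : j = k
  · have hc : j - ((N / 2 : ℕ) : Fin N) = k + ((N / 2 : ℕ) : Fin N) := by
      rw [sub_eq_add_neg, hnegm, hcase]
    rw [if_pos hc, if_pos hcase, hc, ← hcase, pow_val_add hneg1, valm hN]
    have hsq : (-1 : ℂ) ^ (j : ℕ) * (-1 : ℂ) ^ (j : ℕ) = 1 := by
      rw [← pow_add]
      exact Even.neg_one_pow ⟨(j : ℕ), rfl⟩
    rw [mul_one, ← mul_assoc, hsq, one_mul]
  · have hc : ¬ (j - ((N / 2 : ℕ) : Fin N) = k + ((N / 2 : ℕ) : Fin N)) := by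
      intro h
      rw [sub_eq_iff_eq_add] at h
      exact hcase (by rw [h, add_assoc, hmm, add_zero])
    rw [if_neg hc, if_neg hcase, mul_zero, mul_zero]

end HarperAux

/-- For `N` even, the spectrum of the Harper matrix is symmetric about zero. -/
theorem harper_spectrum_symm_even (N : ℕ) (hN : 2 ≤ N) (hNe : Even N) (a b ε : ℝ) (lam : ℂ) :
    lam ∈ spectrum ℂ (harper N a b ε) ↔ -lam ∈ spectrum ℂ (harper N a b ε) := by
  have : NeZero N := ⟨by omega⟩
  set U := HarperAux.parW N with hU
  have hkey := HarperAux.key hN hNe a b ε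
  have hUU := HarperAux.UU (N := N) hN hNe
  set s : ℂ := (-1 : ℂ) ^ (N / 2) with hs
  have hss : s * s = 1 := by
    rw [hs, ← pow_add]
    exact Even.neg_one_pow ⟨N / 2, rfl⟩
  have unitAux : ∀ A B : Matrix (Fin N) (Fin N) ℂ, A * B = 1 → IsUnit A := by
    intro A B h
    exact ⟨⟨A, B, h, mul_eq_one_comm.mp h⟩, rfl⟩
  have hUunit : IsUnit U := by
    apply unitAux _ (s • U)
    rw [Matrix.mul_smul, hUU, smul_smul, hss, one_smul]
  have hscUnit : IsUnit ((-s) • (1 : Matrix (Fin N) (Fin N) ℂ)) := by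
    apply unitAux _ ((-s) • (1 : Matrix (Fin N) (Fin N) ℂ))
    rw [Matrix.smul_mul, Matrix.mul_smul, Matrix.mul_one, smul_smul, neg_mul_neg, hss, one_smul]
  have aux : ∀ c : ℂ,
      IsUnit (algebraMap ℂ (Matrix (Fin N) (Fin N) ℂ) c - harper N a b ε) →
      IsUnit (algebraMap ℂ (Matrix (Fin N) (Fin N) ℂ) (-c) - harper N a b ε) := by
    intro c hc
    have e1 : U * (algebraMap ℂ (Matrix (Fin N) (Fin N) ℂ) c - harper N a b ε)
        = c • U + harper N a b ε * U := by
      rw [Matrix.mul_sub, hkey, sub_neg_eq_add, Algebra.algebraMap_eq_smul_one,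
        Matrix.mul_smul, Matrix.mul_one]
    have e2 : (c • U + harper N a b ε * U) * U
        = (c * s) • (1 : Matrix (Fin N) (Fin N) ℂ) + s • harper N a b ε := by
      rw [Matrix.add_mul, Matrix.smul_mul, hUU, Matrix.mul_assoc, hUU,
        Matrix.mul_smul, Matrix.mul_one, smul_smul]
    have hmain : algebraMap ℂ (Matrix (Fin N) (Fin N) ℂ) (-c) - harper N a b ε
        = (-s) • (U * ((algebraMap ℂ (Matrix (Fin N) (Fin N) ℂ) c - harper N a b ε) * U)) := by
      rw [← Matrix.mul_assoc, e1, e2, smul_add, smul_smul, smul_smul,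
        show (-s) * (c * s) = -c from by
          rw [show (-s) * (c * s) = -(c * (s * s)) from by ring, hss, mul_one],
        show (-s) * s = -1 from by rw [show (-s) * s = -(s * s) from by ring, hss],
        neg_one_smul, Algebra.algebraMap_eq_smul_one, sub_eq_add_neg]
    rw [hmain, show (-s) • (U * ((algebraMap ℂ (Matrix (Fin N) (Fin N) ℂ) c - harper N a b ε) * U))
        = ((-s) • (1 : Matrix (Fin N) (Fin N) ℂ))
          * (U * ((algebraMap ℂ (Matrix (Fin N) (Fin N) ℂ) c - harper N a b ε) * U)) from by
        rw [Matrix.smul_mul, Matrix.one_mul]]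
    exact hscUnit.mul (hUunit.mul (hc.mul hUunit))
  rw [spectrum.mem_iff, spectrum.mem_iff]
  constructor
  · intro h1 h2
    exact h1 (by simpa using aux (-lam) h2)
  · intro h1 h2
    exact h1 (aux lam h2)
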